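/- For every k ≥ 2 there exists a directed hypergraph H such that every hyperedge has exactly k head-vertices and k tail-vertices, whenever two hyperedges intersect in exactly one vertex that vertex is a head-vertex of at least one of them, and yet H admits no proper 2-coloring. Concretely: take V = V_0 ∪ V_1 ∪ V_2 with |V_i| = 2k-1 disjoint, and for each i ∈ {0,1,2} and each pair of k-subsets A ⊆ V_i, B ⊆ V_{i+1 mod 3}, the hyperedge with head A and tail B. This H has no proper 2-coloring. -/

import Mathlib

/-- For every `k ≥ 2` there is a directed hypergraph in which every hyperedge has
exactly `k` head-vertices and `k` tail-vertices, whenever two hyperedges intersect in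
exactly one vertex that vertex is a head-vertex of at least one of them, and which has
no proper 2-coloring. Concretely, on `V = V₀ ∪ V₁ ∪ V₂` with `|Vᵢ| = 2k-1`, take for
each `i` all hyperedges with head a `k`-subset of `Vᵢ` and tail a `k`-subset of
`V_{i+1}`. Hyperedges are pairs `(tail, head)`. -/
theorem stmt10 (k : ℕ) (hk : 2 ≤ k) :
    ∃ E : Set (Finset (Fin 3 × Fin (2 * k - 1)) × Finset (Fin 3 × Fin (2 * k - 1))),
      (∀ e, e ∈ E ↔ ∃ i : Fin 3,
        (∀ v ∈ e.2, v.1 = i) ∧ (∀ v ∈ e.1, v.1 = i + 1) ∧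
        e.2.card = k ∧ e.1.card = k) ∧
      (∀ e ∈ E, Disjoint e.1 e.2 ∧ e.1.card = k ∧ e.2.card = k) ∧
      (∀ e₁ ∈ E, ∀ e₂ ∈ E, ∀ v,
        (e₁.1 ∪ e₁.2) ∩ (e₂.1 ∪ e₂.2) = {v} → v ∈ e₁.2 ∨ v ∈ e₂.2) ∧
      ¬ ∃ f : Fin 3 × Fin (2 * k - 1) → Bool,
        ∀ e ∈ E, ∃ u ∈ e.1 ∪ e.2, ∃ w ∈ e.1 ∪ e.2, f u ≠ f w := by
  have hne : ∀ i : Fin 3, i + 1 ≠ i := by decide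
  refine ⟨{e | ∃ i : Fin 3,
      (∀ v ∈ e.2, v.1 = i) ∧ (∀ v ∈ e.1, v.1 = i + 1) ∧
      e.2.card = k ∧ e.1.card = k}, fun e => Iff.rfl, ?_, ?_, ?_⟩
  · rintro e ⟨i, h2, h1, hc2, hc1⟩
    refine ⟨Finset.disjoint_left.2 fun v hv1 hv2 => ?_, hc1, hc2⟩
    exact hne i ((h1 v hv1).symm.trans (h2 v hv2))
  · rintro e₁ ⟨i₁, h12, h11, hc12, hc11⟩ e₂ ⟨i₂, h22, h21, hc22, hc21⟩ v hv
    by_contra hcon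
    push_neg at hcon
    have hv1 : v ∈ e₁.1 ∪ e₁.2 ∧ v ∈ e₂.1 ∪ e₂.2 := by
      rw [← Finset.mem_inter, hv]; exact Finset.mem_singleton_self v
    have hv1' : v ∈ e₁.1 := by
      rcases Finset.mem_union.1 hv1.1 with h | h
      · exact h
      · exact absurd h hcon.1
    have hv2' : v ∈ e₂.1 := by
      rcases Finset.mem_union.1 hv1.2 with h | h
      · exact h
      · exact absurd h hcon.2
    have hii : i₁ = i₂ := by
      have h := (h11 v hv1').symm.trans (h21 v hv2')
      exact add_right_cancel h
    subst hii
    have hsub : e₁.2 ∪ e₂.2 ⊆ ({i₁} ×ˢ Finset.univ : Finset (Fin 3 × Fin (2 * k - 1))) := by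
      intro x hx
      rcases Finset.mem_union.1 hx with h | h
      · exact Finset.mem_product.2 ⟨Finset.mem_singleton.2 (h12 x h), Finset.mem_univ _⟩
      · exact Finset.mem_product.2 ⟨Finset.mem_singleton.2 (h22 x h), Finset.mem_univ _⟩
    have hcard : (e₁.2 ∪ e₂.2).card ≤ 2 * k - 1 := by
      calc (e₁.2 ∪ e₂.2).card ≤ ({i₁} ×ˢ Finset.univ : Finset (Fin 3 × Fin (2 * k - 1))).card :=
            Finset.card_le_card hsub
        _ = 2 * k - 1 := by simp
    have hiu := Finset.card_union_add_card_inter e₁.2 e₂.2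
    rw [hc12, hc22] at hiu
    have hnonempty : (e₁.2 ∩ e₂.2).Nonempty := by
      rw [← Finset.card_pos]; omega
    obtain ⟨w, hw⟩ := hnonempty
    have hw1 := Finset.mem_inter.1 hw
    have hwv : w = v := by
      have : w ∈ (e₁.1 ∪ e₁.2) ∩ (e₂.1 ∪ e₂.2) := by
        rw [Finset.mem_inter]
        exact ⟨Finset.mem_union_right _ hw1.1, Finset.mem_union_right _ hw1.2⟩
      rw [hv] at this
      exact Finset.mem_singleton.1 this
    have : i₁ + 1 = i₁ := by
      rw [← h11 v hv1', ← hwv, h12 w hw1.1]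
    exact hne i₁ this
  · rintro ⟨f, hf⟩
    -- majority color in each part
    have hmaj : ∀ i : Fin 3, ∃ c : Bool,
        k ≤ (Finset.univ.filter fun j : Fin (2 * k - 1) => f (i, j) = c).card := by
      intro i
      by_contra h
      push_neg at h
      have h1 := h true
      have h2 := h false
      have hsum := Finset.card_filter_add_card_filter_not
        (s := (Finset.univ : Finset (Fin (2 * k - 1))))
        (p := fun j => f (i, j) = true)
      simp only [Bool.not_eq_true, Finset.card_univ, Fintype.card_fin] at hsum
      omega
    choose c hc using hmaj
    have hcons : ∃ i : Fin 3, c i = c (i + 1) := by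
      by_contra h
      push_neg at h
      have h0 := h 0
      have h1 := h 1
      have h2 := h 2
      have e1 : (0 : Fin 3) + 1 = 1 := by decide
      have e2 : (1 : Fin 3) + 1 = 2 := by decide
      have e3 : (2 : Fin 3) + 1 = 0 := by decide
      rw [e1] at h0
      rw [e2] at h1
      rw [e3] at h2
      rcases Bool.eq_false_or_eq_true (c 0) with b0 | b0 <;>
      rcases Bool.eq_false_or_eq_true (c 1) with b1 | b1 <;>
      rcases Bool.eq_false_or_eq_true (c 2) with b2 | b2
      all_goals first
        | exact h0 (b0.trans b1.symm)
        | exact h1 (b1.trans b2.symm)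
        | exact h2 (b2.trans b0.symm)
    obtain ⟨i, hci⟩ := hcons
    set col := c i with hcol
    -- pick k-subsets
    obtain ⟨A, hAsub, hAcard⟩ := Finset.exists_subset_card_eq (hc i)
    obtain ⟨B, hBsub, hBcard⟩ := Finset.exists_subset_card_eq (hci ▸ hc (i + 1))
    set A' := A.image (fun j => (i, j)) with hA'
    set B' := B.image (fun j => (i + 1, j)) with hB'
    have hinj : ∀ (m : Fin 3), Function.Injective (fun j : Fin (2 * k - 1) => (m, j)) := by
      intro m a b hab; simpa using hab
    have heE : (B', A') ∈ {e : Finset (Fin 3 × Fin (2 * k - 1)) × Finset (Fin 3 × Fin (2 * k - 1)) | ∃ i : Fin 3,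
        (∀ v ∈ e.2, v.1 = i) ∧ (∀ v ∈ e.1, v.1 = i + 1) ∧
        e.2.card = k ∧ e.1.card = k} := by
      refine ⟨i, ?_, ?_, ?_, ?_⟩
      · intro v hv
        obtain ⟨j, _, rfl⟩ := Finset.mem_image.1 hv
        rfl
      · intro v hv
        obtain ⟨j, _, rfl⟩ := Finset.mem_image.1 hv
        rfl
      · rw [hA', Finset.card_image_of_injective _ (hinj i), hAcard]
      · rw [hB', Finset.card_image_of_injective _ (hinj (i + 1)), hBcard]
    obtain ⟨u, hu, w, hw, huw⟩ := hf _ heE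
    have hmono : ∀ x ∈ B' ∪ A', f x = col := by
      intro x hx
      rcases Finset.mem_union.1 hx with h | h
      · obtain ⟨j, hj, rfl⟩ := Finset.mem_image.1 h
        exact (Finset.mem_filter.1 (hBsub hj)).2
      · obtain ⟨j, hj, rfl⟩ := Finset.mem_image.1 h
        exact (Finset.mem_filter.1 (hAsub hj)).2
    exact huw ((hmono u hu).trans (hmono w hw).symm)
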